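/- In a distributive meet-semilattice, a proper filter F is irreducible if and only if for every a,b ∉ F there exist c ∉ F and f ∈ F such that a∧f ≤ c and b∧f ≤ c. -/
import Mathlib


namespace DS

variable {A : Type*} [SemilatticeInf A] [OrderTop A]

/-- A filter: an upset containing the top element, closed under meets. -/
def IsFilt (F : Set A) : Prop :=
  IsUpperSet F ∧ ⊤ ∈ F ∧ ∀ ⦃a b : A⦄, a ∈ F → b ∈ F → a ⊓ b ∈ F

/-- An irreducible (prime) filter: a proper filter that is meet-irreducible
among filters. -/
def IsIrred (F : Set A) : Prop :=
  IsFilt F ∧ F ≠ Set.univ ∧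
    ∀ F₁ F₂ : Set A, IsFilt F₁ → IsFilt F₂ → F = F₁ ∩ F₂ → F = F₁ ∨ F = F₂

/-- An order ideal: a downset in which every pair of elements has an upper
bound in the set. -/
def IsOrdIdeal (I : Set A) : Prop :=
  IsLowerSet I ∧ ∀ a ∈ I, ∀ b ∈ I, ∃ c ∈ I, a ≤ c ∧ b ≤ c

/-- Distributivity for a meet-semilattice with top. -/
def IsDistrib (A : Type*) [SemilatticeInf A] [OrderTop A] : Prop :=
  ∀ a b c : A, a ⊓ b ≤ c → ∃ a₁ b₁ : A, a ≤ a₁ ∧ b ≤ b₁ ∧ c = a₁ ⊓ b₁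

/-- The set of irreducible filters of `A`, ordered by inclusion. -/
def Spec (A : Type*) [SemilatticeInf A] [OrderTop A] : Type _ :=
  {P : Set A // IsIrred P}

instance : PartialOrder (Spec A) := Subtype.partialOrder _

/-- `beta a` = the set of irreducible filters containing `a`. -/
def beta (a : A) : Set (Spec A) := {P : Spec A | a ∈ P.1}

/-- The topology on `Spec A` generated by the basis `{beta aᶜ : a ∈ A}`. -/
def specTop (A : Type*) [SemilatticeInf A] [OrderTop A] : TopologicalSpace (Spec A) :=
  TopologicalSpace.generateFrom {s : Set (Spec A) | ∃ a : A, s = (beta a)ᶜ}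

/-- Special basic saturated subsets: intersections of dually directed families
of basic opens `beta aᶜ`. -/
def SBS (Z : Set (Spec A)) : Prop :=
  ∃ L : Set A, (∀ a ∈ L, ∀ b ∈ L, ∃ c ∈ L, beta a ∪ beta b ⊆ beta c) ∧
    Z = ⋂ a ∈ L, (beta a)ᶜ

/-- The order ideal associated to a special basic saturated set. -/
def IA (Z : Set (Spec A)) : Set A := {a : A | beta a ∩ Z = ∅}

/-- The special basic saturated set associated to an order ideal. -/
def alphaI (I : Set A) : Set (Spec A) := {P : Spec A | P.1 ∩ I = ∅}

/-- The filter associated to a closed set. -/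
def FY (Y : Set (Spec A)) : Set A := {a : A | Y ⊆ beta a}

/-- The multirelation `R_m` on the dual space. -/
def Rm (m : A → A) (P : Spec A) (Z : Set (Spec A)) : Prop :=
  {a : A | m a ∈ P.1} ∩ IA Z = ∅

/-- The multirelation `G_m` on the dual space. -/
def Gm (m : A → A) (P : Spec A) (Y : Set (Spec A)) : Prop :=
  FY Y ⊆ {a : A | m a ∈ P.1}

/-- The composed relation `R_m²`. -/
def Rm2 (m : A → A) (P : Spec A) (Z : Set (Spec A)) : Prop :=
  ∃ S : Set (Spec A), SBS S ∧ Rm m P S ∧ ∀ x ∈ S, Rm m x Z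

end DS

open DS Set

theorem stmt2 {A : Type*} [SemilatticeInf A] [OrderTop A] (hA : IsDistrib A)
    (F : Set A) (hF : IsFilt F) (hprop : F ≠ Set.univ) :
    IsIrred F ↔
      ∀ a b : A, a ∉ F → b ∉ F →
        ∃ c ∉ F, ∃ f ∈ F, a ⊓ f ≤ c ∧ b ⊓ f ≤ c := by

  constructor
  · rintro ⟨-, -, hirr⟩ a b ha hb
    set F₁ : Set A := {x | ∃ f ∈ F, a ⊓ f ≤ x} with hF₁
    set F₂ : Set A := {x | ∃ f ∈ F, b ⊓ f ≤ x} with hF₂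
    have filt : ∀ (u : A), IsFilt {x | ∃ f ∈ F, u ⊓ f ≤ x} := by
      intro u
      refine ⟨?_, ⟨⊤, hF.2.1, le_top⟩, ?_⟩
      · intro x y hxy ⟨f, hf, hle⟩
        exact ⟨f, hf, hle.trans hxy⟩
      · rintro x y ⟨f, hf, hfx⟩ ⟨g, hg, hgy⟩
        refine ⟨f ⊓ g, hF.2.2 hf hg, le_inf ?_ ?_⟩
        · exact le_trans (inf_le_inf_left u inf_le_left) hfx
        · exact le_trans (inf_le_inf_left u inf_le_right) hgy
    have hsub : F ⊆ F₁ ∩ F₂ := by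
      intro x hx
      exact ⟨⟨x, hx, inf_le_right⟩, ⟨x, hx, inf_le_right⟩⟩
    have hne : F ≠ F₁ ∩ F₂ := by
      intro h
      rcases hirr F₁ F₂ (filt a) (filt b) h with h1 | h1
      · exact ha (h1 ▸ ⟨⊤, hF.2.1, by simp⟩)
      · exact hb (h1 ▸ ⟨⊤, hF.2.1, by simp⟩)
    have : ∃ c ∈ F₁ ∩ F₂, c ∉ F := by
      by_contra h
      push_neg at h
      exact hne (Set.Subset.antisymm hsub fun x hx => h x hx)
    rcases this with ⟨c, ⟨⟨f, hf, haf⟩, ⟨g, hg, hbg⟩⟩, hc⟩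
    refine ⟨c, hc, f ⊓ g, hF.2.2 hf hg, ?_, ?_⟩
    · exact le_trans (inf_le_inf_left a inf_le_left) haf
    · exact le_trans (inf_le_inf_left b inf_le_right) hbg
  · intro h
    refine ⟨hF, hprop, ?_⟩
    intro F₁ F₂ h1 h2 heq
    by_contra hcon
    push_neg at hcon
    have hsub1 : F ⊆ F₁ := heq ▸ Set.inter_subset_left
    have hsub2 : F ⊆ F₂ := heq ▸ Set.inter_subset_right
    obtain ⟨a, ha1, haF⟩ : ∃ a ∈ F₁, a ∉ F := by
      by_contra hx; push_neg at hx
      exact hcon.1 (Set.Subset.antisymm hsub1 fun x hxx => hx x hxx)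
    obtain ⟨b, hb2, hbF⟩ : ∃ b ∈ F₂, b ∉ F := by
      by_contra hx; push_neg at hx
      exact hcon.2 (Set.Subset.antisymm hsub2 fun x hxx => hx x hxx)
    obtain ⟨c, hc, f, hf, hac, hbc⟩ := h a b haF hbF
    have hc1 : c ∈ F₁ := h1.1 hac (h1.2.2 ha1 (hsub1 hf))
    have hc2 : c ∈ F₂ := h2.1 hbc (h2.2.2 hb2 (hsub2 hf))
    exact hc (heq ▸ ⟨hc1, hc2⟩)
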